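/- Let X, Y, Z, W be jointly Gaussian real random variables each with mean zero. Then E[XYZW] = E[XY]·E[ZW] + E[XZ]·E[YW] + E[XW]·E[YZ] (Isserlis' formula for four centered jointly Gaussian variables). -/

import Mathlib

open MeasureTheory ProbabilityTheory
open scoped NNReal ENNReal
open Real


lemma pow_le_factorial_mul_exp (n : ℕ) {x : ℝ} (hx : 0 ≤ x) :
    x ^ n ≤ n.factorial * Real.exp x := by
  have h1 : x ^ n / n.factorial ≤ Real.exp x := by
    calc x ^ n / n.factorial ≤ ∑ i ∈ Finset.range (n+1), x ^ i / i.factorial := by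
          refine Finset.single_le_sum (f := fun i => x ^ i / (i.factorial : ℝ)) ?_ ?_
          · intro i _; positivity
          · exact Finset.self_mem_range_succ n
      _ ≤ Real.exp x := Real.sum_le_exp_of_nonneg hx _
  have hf : (0:ℝ) < n.factorial := by positivity
  calc x ^ n = n.factorial * (x ^ n / n.factorial) := by field_simp
    _ ≤ n.factorial * Real.exp x := by
        exact mul_le_mul_of_nonneg_left h1 hf.le

lemma integrable_pow_mul_exp (n : ℕ) {b : ℝ} (hb : 0 < b) :
    Integrable (fun x : ℝ => x ^ n * Real.exp (-b * x ^ 2)) := by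
  have hb2 : 0 < b / 2 := by linarith
  refine Integrable.mono' ((integrable_exp_neg_mul_sq hb2).const_mul
    (n.factorial * Real.exp (1 / (2 * b)))) ?_ ?_
  · exact ((measurable_id.pow_const n).mul
      ((measurable_id.pow_const 2).const_mul (-b)).exp).aestronglyMeasurable
  · refine Filter.Eventually.of_forall fun x => ?_
    have h1 : |x| ^ n ≤ n.factorial * Real.exp |x| := pow_le_factorial_mul_exp n (abs_nonneg x)
    have h2 : |x| - b * x ^ 2 ≤ 1 / (2 * b) - b / 2 * x ^ 2 := by
      have he : 1 / (2 * b) - b / 2 * x ^ 2 - (|x| - b * x ^ 2) = b / 2 * (|x| - 1 / b) ^ 2 := by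
        field_simp; rw [← sq_abs x]; ring
      nlinarith [mul_nonneg (by linarith : (0:ℝ) ≤ b / 2) (sq_nonneg (|x| - 1 / b))]
    have h3 : Real.exp (|x| - b * x ^ 2) ≤ Real.exp (1 / (2 * b) - b / 2 * x ^ 2) :=
      Real.exp_le_exp.2 h2
    have : ‖x ^ n * Real.exp (-b * x ^ 2)‖ = |x| ^ n * Real.exp (-b * x ^ 2) := by
      rw [norm_mul, norm_pow, Real.norm_eq_abs, Real.norm_eq_abs,
        abs_of_pos (Real.exp_pos _)]
    rw [this]
    calc |x| ^ n * Real.exp (-b * x ^ 2)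
        ≤ (n.factorial * Real.exp |x|) * Real.exp (-b * x ^ 2) :=
          mul_le_mul_of_nonneg_right h1 (Real.exp_pos _).le
      _ = n.factorial * Real.exp (|x| - b * x ^ 2) := by
          rw [mul_assoc, ← Real.exp_add]; ring_nf
      _ ≤ n.factorial * Real.exp (1 / (2 * b) - b / 2 * x ^ 2) := by
          exact mul_le_mul_of_nonneg_left h3 (by positivity)
      _ = n.factorial * Real.exp (1 / (2 * b)) * Real.exp (-(b / 2) * x ^ 2) := by
          rw [mul_assoc, ← Real.exp_add]; ring_nf

lemma gauss_step (n : ℕ) {b : ℝ} (hb : 0 < b) :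
    ((n : ℝ) + 1) * ∫ x : ℝ, x ^ n * Real.exp (-b * x ^ 2) =
    2 * b * ∫ x : ℝ, x ^ (n + 2) * Real.exp (-b * x ^ 2) := by
  set f : ℝ → ℝ := fun x => x ^ (n + 1) * Real.exp (-b * x ^ 2) with hf
  set f' : ℝ → ℝ := fun x =>
    ((n : ℝ) + 1) * (x ^ n * Real.exp (-b * x ^ 2)) -
    2 * b * (x ^ (n + 2) * Real.exp (-b * x ^ 2)) with hf'
  have hderiv : ∀ x : ℝ, HasDerivAt f (f' x) x := by
    intro x
    have h1 : HasDerivAt (fun x : ℝ => x ^ (n + 1))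
        (((n : ℝ) + 1) * x ^ n) x := by
      simpa using hasDerivAt_pow (n + 1) x
    have h2 : HasDerivAt (fun x : ℝ => -b * x ^ 2) (-b * (2 * x)) x := by
      simpa using (hasDerivAt_pow 2 x).const_mul (-b)
    have h3 : HasDerivAt (fun x : ℝ => Real.exp (-b * x ^ 2))
        (Real.exp (-b * x ^ 2) * (-b * (2 * x))) x := h2.exp
    have : HasDerivAt f _ x := h1.fun_mul h3
    convert this using 1
    simp only [f']
    ring
  have hint : ∀ m : ℕ, Integrable (fun x : ℝ => x ^ m * Real.exp (-b * x ^ 2)) :=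
    fun m => integrable_pow_mul_exp m hb
  have hf'int : Integrable f' := ((hint n).const_mul _).sub ((hint (n + 2)).const_mul _)
  have hfint : Integrable f := hint (n + 1)
  have h0 : ∫ x, f' x = 0 :=
    integral_eq_zero_of_hasDerivAt_of_integrable hderiv hf'int hfint
  rw [hf'] at h0
  rw [integral_sub ((hint n).const_mul _) ((hint (n + 2)).const_mul _),
    integral_const_mul, integral_const_mul] at h0
  linarith

lemma gauss_J0 {b : ℝ} (hb : 0 < b) :
    ∫ x : ℝ, x ^ 0 * Real.exp (-b * x ^ 2) = Real.sqrt (Real.pi / b) := by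
  simpa using integral_gaussian b

lemma gaussianReal_pdf_smul (v : ℝ≥0) (hv : v ≠ 0) (g : ℝ → ℝ) :
    ∫ x, g x ∂(gaussianReal 0 v) =
      ∫ x, gaussianPDFReal 0 v x * g x := by
  rw [gaussianReal_of_var_ne_zero 0 hv]
  have hmeas : Measurable fun x => (gaussianPDFReal 0 v x).toNNReal :=
    (measurable_gaussianPDFReal 0 v).real_toNNReal
  have hpdf : gaussianPDF 0 v = fun x => ((gaussianPDFReal 0 v x).toNNReal : ℝ≥0∞) := rfl
  rw [hpdf, integral_withDensity_eq_integral_smul hmeas g]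
  congr 1
  funext x
  rw [NNReal.smul_def, Real.coe_toNNReal _ (gaussianPDFReal_nonneg 0 v x), smul_eq_mul]

lemma gaussianReal_integrable_iff (v : ℝ≥0) (hv : v ≠ 0) (g : ℝ → ℝ) :
    Integrable g (gaussianReal 0 v) ↔
      Integrable (fun x => gaussianPDFReal 0 v x * g x) := by
  rw [gaussianReal_of_var_ne_zero 0 hv]
  have hmeas : Measurable fun x => (gaussianPDFReal 0 v x).toNNReal :=
    (measurable_gaussianPDFReal 0 v).real_toNNReal
  have hpdf : gaussianPDF 0 v = fun x => ((gaussianPDFReal 0 v x).toNNReal : ℝ≥0∞) := rfl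
  rw [hpdf, integrable_withDensity_iff_integrable_smul hmeas]
  constructor <;> intro h <;> refine h.congr (Filter.Eventually.of_forall fun x => ?_) <;>
    simp [NNReal.smul_def, Real.coe_toNNReal _ (gaussianPDFReal_nonneg 0 v x), smul_eq_mul]

lemma integrable_dirac' {f : ℝ → ℝ} (a : ℝ) : Integrable f (Measure.dirac a) := by
  refine (integrable_const (f a)).congr ?_
  rw [Filter.eventuallyEq_comm, Filter.EventuallyEq, ae_dirac_eq]
  simp

lemma gaussianReal_moments (v : ℝ≥0) :
    Integrable (fun x : ℝ => x ^ 2) (gaussianReal 0 v) ∧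
    Integrable (fun x : ℝ => x ^ 4) (gaussianReal 0 v) ∧
    (∫ x, x ^ 2 ∂(gaussianReal 0 v)) = v ∧
    (∫ x, x ^ 4 ∂(gaussianReal 0 v)) = 3 * (v : ℝ) ^ 2 := by
  by_cases hv : v = 0
  · subst hv
    rw [gaussianReal_zero_var]
    refine ⟨integrable_dirac' 0, integrable_dirac' 0, ?_, ?_⟩ <;>
      simp [integral_dirac]
  · have hvpos : (0 : ℝ) < v := by
      exact_mod_cast pos_iff_ne_zero.mpr hv
    set b : ℝ := (2 * (v : ℝ))⁻¹ with hbdef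
    have hb : 0 < b := by positivity
    set c : ℝ := (Real.sqrt (2 * π * v))⁻¹ with hcdef
    have hpdf : ∀ x : ℝ, gaussianPDFReal 0 v x = c * Real.exp (-b * x ^ 2) := by
      intro x
      rw [gaussianPDFReal]
      have harg : -(x - 0) ^ 2 / (2 * (v : ℝ)) = -b * x ^ 2 := by
        rw [hbdef]; field_simp; ring
      rw [harg]
    set J0 : ℝ := ∫ x, x ^ 0 * Real.exp (-b * x ^ 2) with hJ0def
    set J2 : ℝ := ∫ x, x ^ 2 * Real.exp (-b * x ^ 2) with hJ2def
    set J4 : ℝ := ∫ x, x ^ 4 * Real.exp (-b * x ^ 2) with hJ4def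
    have hJ : ∀ n : ℕ, ∫ x, gaussianPDFReal 0 v x * x ^ n =
        c * ∫ x, x ^ n * Real.exp (-b * x ^ 2) := by
      intro n
      rw [← integral_const_mul]
      congr 1
      funext x
      rw [hpdf x]
      ring
    have hmass : c * J0 = 1 := by
      rw [hJ0def, ← hJ 0]
      simpa using integral_gaussianPDFReal_eq_one 0 hv
    have h2b : 2 * b = (v : ℝ)⁻¹ := by
      rw [hbdef]
      field_simp
    have hstep0 : ((0 : ℝ) + 1) * J0 = 2 * b * J2 := by exact_mod_cast gauss_step 0 hb
    have hstep2 : ((2 : ℝ) + 1) * J2 = 2 * b * J4 := by exact_mod_cast gauss_step 2 hb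
    rw [h2b] at hstep0 hstep2
    have hvne : (v : ℝ) ≠ 0 := ne_of_gt hvpos
    have hJ2 : J2 = (v : ℝ) * J0 := by
      field_simp at hstep0
      linarith
    have hJ4 : J4 = 3 * (v : ℝ) ^ 2 * J0 := by
      field_simp at hstep2
      nlinarith [hJ2]
    have hint : ∀ n : ℕ, Integrable (fun x : ℝ => x ^ n) (gaussianReal 0 v) := by
      intro n
      rw [gaussianReal_integrable_iff v hv]
      refine ((integrable_pow_mul_exp n hb).const_mul c).congr
        (Filter.Eventually.of_forall fun x => ?_)
      simp only [hpdf]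
      ring
    refine ⟨hint 2, hint 4, ?_, ?_⟩
    · rw [gaussianReal_pdf_smul v hv]
      have := hJ 2
      rw [← hJ2def] at this
      rw [this, hJ2]
      nlinarith [hmass]
    · rw [gaussianReal_pdf_smul v hv]
      have := hJ 4
      rw [← hJ4def] at this
      rw [this, hJ4]
      nlinarith [hmass]

lemma gauss_rv {Ω : Type*} [MeasurableSpace Ω] (P : Measure Ω) {S : Ω → ℝ} (hS : Measurable S)
    {v : ℝ≥0} (h : Measure.map S P = gaussianReal 0 v) :
    Integrable (fun ω => S ω ^ 2) P ∧ Integrable (fun ω => S ω ^ 4) P ∧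
    ∫ ω, S ω ^ 4 ∂P = 3 * (∫ ω, S ω ^ 2 ∂P) ^ 2 := by
  obtain ⟨h2i, h4i, h2, h4⟩ := gaussianReal_moments v
  have hS' : AEMeasurable S P := hS.aemeasurable
  have m2 : AEStronglyMeasurable (fun x : ℝ => x ^ 2) (Measure.map S P) :=
    (measurable_id.pow_const 2).aestronglyMeasurable
  have m4 : AEStronglyMeasurable (fun x : ℝ => x ^ 4) (Measure.map S P) :=
    (measurable_id.pow_const 4).aestronglyMeasurable
  refine ⟨(integrable_map_measure m2 hS').1 (h.symm ▸ h2i),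
    (integrable_map_measure m4 hS').1 (h.symm ▸ h4i), ?_⟩
  have e2 : ∫ ω, S ω ^ 2 ∂P = (v : ℝ) := by
    rw [← integral_map hS' m2, h, h2]
  have e4 : ∫ ω, S ω ^ 4 ∂P = 3 * (v : ℝ) ^ 2 := by
    rw [← integral_map hS' m4, h, h4]
  rw [e2, e4]


/-- Isserlis' formula for four centered jointly Gaussian real random variables.
Joint Gaussianity is expressed by requiring every linear combination to be a
centered real Gaussian. -/
theorem stmt2 {Ω : Type*} [MeasurableSpace Ω] (P : Measure Ω) [IsProbabilityMeasure P]
    (X Y Z W : Ω → ℝ)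
    (hX : Measurable X) (hY : Measurable Y) (hZ : Measurable Z) (hW : Measurable W)
    (hGauss : ∀ a b c d : ℝ, ∃ v : NNReal,
      Measure.map (fun ω => a * X ω + b * Y ω + c * Z ω + d * W ω) P = gaussianReal 0 v)
    (hint4 : Integrable (fun ω => X ω * Y ω * Z ω * W ω) P)
    (hXY : Integrable (fun ω => X ω * Y ω) P)
    (hXZ : Integrable (fun ω => X ω * Z ω) P)
    (hXW : Integrable (fun ω => X ω * W ω) P)
    (hYZ : Integrable (fun ω => Y ω * Z ω) P)
    (hYW : Integrable (fun ω => Y ω * W ω) P)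
    (hZW : Integrable (fun ω => Z ω * W ω) P) :
    ∫ ω, X ω * Y ω * Z ω * W ω ∂P =
      (∫ ω, X ω * Y ω ∂P) * (∫ ω, Z ω * W ω ∂P) +
      (∫ ω, X ω * Z ω ∂P) * (∫ ω, Y ω * W ω ∂P) +
      (∫ ω, X ω * W ω ∂P) * (∫ ω, Y ω * Z ω ∂P) := by
  have gaussC : ∀ a b c d : ℝ,
      Integrable (fun ω => (a * X ω + b * Y ω + c * Z ω + d * W ω) ^ 2) P ∧
      Integrable (fun ω => (a * X ω + b * Y ω + c * Z ω + d * W ω) ^ 4) P ∧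
      ∫ ω, (a * X ω + b * Y ω + c * Z ω + d * W ω) ^ 4 ∂P =
        3 * (∫ ω, (a * X ω + b * Y ω + c * Z ω + d * W ω) ^ 2 ∂P) ^ 2 := by
    intro a b c d
    obtain ⟨v, hv⟩ := hGauss a b c d
    exact gauss_rv P
      ((((hX.const_mul a).add (hY.const_mul b)).add (hZ.const_mul c)).add (hW.const_mul d)) hv
  have hX2 : Integrable (fun ω => X ω ^ 2) P :=
    ((gaussC 1 0 0 0).1).congr (Filter.Eventually.of_forall fun ω => by ring)
  have hY2 : Integrable (fun ω => Y ω ^ 2) P :=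
    ((gaussC 0 1 0 0).1).congr (Filter.Eventually.of_forall fun ω => by ring)
  have hZ2 : Integrable (fun ω => Z ω ^ 2) P :=
    ((gaussC 0 0 1 0).1).congr (Filter.Eventually.of_forall fun ω => by ring)
  have hW2 : Integrable (fun ω => W ω ^ 2) P :=
    ((gaussC 0 0 0 1).1).congr (Filter.Eventually.of_forall fun ω => by ring)
  have sqexp : ∀ a b c d : ℝ,
      ∫ ω, (a * X ω + b * Y ω + c * Z ω + d * W ω) ^ 2 ∂P =
        a ^ 2 * (∫ ω, X ω ^ 2 ∂P) + b ^ 2 * (∫ ω, Y ω ^ 2 ∂P) + c ^ 2 * (∫ ω, Z ω ^ 2 ∂P) +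
        d ^ 2 * (∫ ω, W ω ^ 2 ∂P) + 2 * a * b * (∫ ω, X ω * Y ω ∂P) +
        2 * a * c * (∫ ω, X ω * Z ω ∂P) + 2 * a * d * (∫ ω, X ω * W ω ∂P) +
        2 * b * c * (∫ ω, Y ω * Z ω ∂P) + 2 * b * d * (∫ ω, Y ω * W ω ∂P) +
        2 * c * d * (∫ ω, Z ω * W ω ∂P) := by
    intro a b c d
    have I1 := hX2.const_mul (a ^ 2)
    have I2 := hY2.const_mul (b ^ 2)
    have I3 := hZ2.const_mul (c ^ 2)
    have I4 := hW2.const_mul (d ^ 2)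
    have I5 := hXY.const_mul (2 * a * b)
    have I6 := hXZ.const_mul (2 * a * c)
    have I7 := hXW.const_mul (2 * a * d)
    have I8 := hYZ.const_mul (2 * b * c)
    have I9 := hYW.const_mul (2 * b * d)
    have I10 := hZW.const_mul (2 * c * d)
    have J10 : Integrable (fun x => 2 * b * d * (Y x * W x) + 2 * c * d * (Z x * W x)) P :=
      I9.add I10
    have J9 : Integrable (fun x => 2 * b * c * (Y x * Z x) +
        (2 * b * d * (Y x * W x) + 2 * c * d * (Z x * W x))) P := I8.add J10
    have J8 : Integrable (fun x => 2 * a * d * (X x * W x) + (2 * b * c * (Y x * Z x) +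
        (2 * b * d * (Y x * W x) + 2 * c * d * (Z x * W x)))) P := I7.add J9
    have J7 : Integrable (fun x => 2 * a * c * (X x * Z x) + (2 * a * d * (X x * W x) +
        (2 * b * c * (Y x * Z x) + (2 * b * d * (Y x * W x) + 2 * c * d * (Z x * W x))))) P :=
      I6.add J8
    have J6 : Integrable (fun x => 2 * a * b * (X x * Y x) + (2 * a * c * (X x * Z x) +
        (2 * a * d * (X x * W x) + (2 * b * c * (Y x * Z x) +
        (2 * b * d * (Y x * W x) + 2 * c * d * (Z x * W x)))))) P := I5.add J7
    have J5 : Integrable (fun x => d ^ 2 * W x ^ 2 + (2 * a * b * (X x * Y x) +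
        (2 * a * c * (X x * Z x) + (2 * a * d * (X x * W x) + (2 * b * c * (Y x * Z x) +
        (2 * b * d * (Y x * W x) + 2 * c * d * (Z x * W x))))))) P := I4.add J6
    have J4 : Integrable (fun x => c ^ 2 * Z x ^ 2 + (d ^ 2 * W x ^ 2 +
        (2 * a * b * (X x * Y x) + (2 * a * c * (X x * Z x) + (2 * a * d * (X x * W x) +
        (2 * b * c * (Y x * Z x) + (2 * b * d * (Y x * W x) +
        2 * c * d * (Z x * W x)))))))) P := I3.add J5
    have J3 : Integrable (fun x => b ^ 2 * Y x ^ 2 + (c ^ 2 * Z x ^ 2 + (d ^ 2 * W x ^ 2 +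
        (2 * a * b * (X x * Y x) + (2 * a * c * (X x * Z x) + (2 * a * d * (X x * W x) +
        (2 * b * c * (Y x * Z x) + (2 * b * d * (Y x * W x) +
        2 * c * d * (Z x * W x))))))))) P := I2.add J4
    have hfun : (fun ω => (a * X ω + b * Y ω + c * Z ω + d * W ω) ^ 2) =
        fun ω => a ^ 2 * X ω ^ 2 + (b ^ 2 * Y ω ^ 2 + (c ^ 2 * Z ω ^ 2 + (d ^ 2 * W ω ^ 2 +
          (2 * a * b * (X ω * Y ω) + (2 * a * c * (X ω * Z ω) + (2 * a * d * (X ω * W ω) +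
          (2 * b * c * (Y ω * Z ω) + (2 * b * d * (Y ω * W ω) +
          2 * c * d * (Z ω * W ω))))))))) := by
      funext ω; ring
    rw [hfun, integral_add I1 J3, integral_add I2 J4, integral_add I3 J5, integral_add I4 J6,
      integral_add I5 J7, integral_add I6 J8, integral_add I7 J9, integral_add I8 J10,
      integral_add I9 I10]
    simp only [integral_const_mul]
    ring
  -- the eight fourth-moment terms
  have F1 := (gaussC 1 1 1 1).2.1
  have F2 := (gaussC 1 1 (-1) (-1)).2.1
  have F3 := (gaussC 1 (-1) 1 (-1)).2.1
  have F4 := (gaussC 1 (-1) (-1) 1).2.1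
  have F5 := (gaussC 1 1 1 (-1)).2.1
  have F6 := (gaussC 1 1 (-1) 1).2.1
  have F7 := (gaussC 1 (-1) 1 1).2.1
  have F8 := (gaussC 1 (-1) (-1) (-1)).2.1
  have hsum : ∫ ω, (192 : ℝ) * (X ω * Y ω * Z ω * W ω) ∂P =
      ((∫ ω, (1 * X ω + 1 * Y ω + 1 * Z ω + 1 * W ω) ^ 4 ∂P) +
       (∫ ω, (1 * X ω + 1 * Y ω + (-1) * Z ω + (-1) * W ω) ^ 4 ∂P) +
       (∫ ω, (1 * X ω + (-1) * Y ω + 1 * Z ω + (-1) * W ω) ^ 4 ∂P) +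
       (∫ ω, (1 * X ω + (-1) * Y ω + (-1) * Z ω + 1 * W ω) ^ 4 ∂P)) -
      ((∫ ω, (1 * X ω + 1 * Y ω + 1 * Z ω + (-1) * W ω) ^ 4 ∂P) +
       (∫ ω, (1 * X ω + 1 * Y ω + (-1) * Z ω + 1 * W ω) ^ 4 ∂P) +
       (∫ ω, (1 * X ω + (-1) * Y ω + 1 * Z ω + 1 * W ω) ^ 4 ∂P) +
       (∫ ω, (1 * X ω + (-1) * Y ω + (-1) * Z ω + (-1) * W ω) ^ 4 ∂P)) := by
    have hfun : (fun ω => (192 : ℝ) * (X ω * Y ω * Z ω * W ω)) =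
        fun ω =>
          ((1 * X ω + 1 * Y ω + 1 * Z ω + 1 * W ω) ^ 4 +
           (1 * X ω + 1 * Y ω + (-1) * Z ω + (-1) * W ω) ^ 4 +
           (1 * X ω + (-1) * Y ω + 1 * Z ω + (-1) * W ω) ^ 4 +
           (1 * X ω + (-1) * Y ω + (-1) * Z ω + 1 * W ω) ^ 4) -
          ((1 * X ω + 1 * Y ω + 1 * Z ω + (-1) * W ω) ^ 4 +
           (1 * X ω + 1 * Y ω + (-1) * Z ω + 1 * W ω) ^ 4 +
           (1 * X ω + (-1) * Y ω + 1 * Z ω + 1 * W ω) ^ 4 +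
           (1 * X ω + (-1) * Y ω + (-1) * Z ω + (-1) * W ω) ^ 4) := by
      funext ω; ring
    have A12 : Integrable (fun ω => (1 * X ω + 1 * Y ω + 1 * Z ω + 1 * W ω) ^ 4 +
        (1 * X ω + 1 * Y ω + (-1) * Z ω + (-1) * W ω) ^ 4) P := F1.add F2
    have A123 : Integrable (fun ω => (1 * X ω + 1 * Y ω + 1 * Z ω + 1 * W ω) ^ 4 +
        (1 * X ω + 1 * Y ω + (-1) * Z ω + (-1) * W ω) ^ 4 +
        (1 * X ω + (-1) * Y ω + 1 * Z ω + (-1) * W ω) ^ 4) P := A12.add F3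
    have A1234 : Integrable (fun ω => (1 * X ω + 1 * Y ω + 1 * Z ω + 1 * W ω) ^ 4 +
        (1 * X ω + 1 * Y ω + (-1) * Z ω + (-1) * W ω) ^ 4 +
        (1 * X ω + (-1) * Y ω + 1 * Z ω + (-1) * W ω) ^ 4 +
        (1 * X ω + (-1) * Y ω + (-1) * Z ω + 1 * W ω) ^ 4) P := A123.add F4
    have B12 : Integrable (fun ω => (1 * X ω + 1 * Y ω + 1 * Z ω + (-1) * W ω) ^ 4 +
        (1 * X ω + 1 * Y ω + (-1) * Z ω + 1 * W ω) ^ 4) P := F5.add F6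
    have B123 : Integrable (fun ω => (1 * X ω + 1 * Y ω + 1 * Z ω + (-1) * W ω) ^ 4 +
        (1 * X ω + 1 * Y ω + (-1) * Z ω + 1 * W ω) ^ 4 +
        (1 * X ω + (-1) * Y ω + 1 * Z ω + 1 * W ω) ^ 4) P := B12.add F7
    have B1234 : Integrable (fun ω => (1 * X ω + 1 * Y ω + 1 * Z ω + (-1) * W ω) ^ 4 +
        (1 * X ω + 1 * Y ω + (-1) * Z ω + 1 * W ω) ^ 4 +
        (1 * X ω + (-1) * Y ω + 1 * Z ω + 1 * W ω) ^ 4 +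
        (1 * X ω + (-1) * Y ω + (-1) * Z ω + (-1) * W ω) ^ 4) P := B123.add F8
    rw [hfun, integral_sub A1234 B1234, integral_add A123 F4, integral_add A12 F3,
      integral_add F1 F2, integral_add B123 F8, integral_add B12 F7, integral_add F5 F6]
  have h192 : ∫ ω, (192 : ℝ) * (X ω * Y ω * Z ω * W ω) ∂P =
      192 * ∫ ω, X ω * Y ω * Z ω * W ω ∂P := integral_const_mul _ _
  have q1 := (gaussC 1 1 1 1).2.2
  have q2 := (gaussC 1 1 (-1) (-1)).2.2
  have q3 := (gaussC 1 (-1) 1 (-1)).2.2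
  have q4 := (gaussC 1 (-1) (-1) 1).2.2
  have q5 := (gaussC 1 1 1 (-1)).2.2
  have q6 := (gaussC 1 1 (-1) 1).2.2
  have q7 := (gaussC 1 (-1) 1 1).2.2
  have q8 := (gaussC 1 (-1) (-1) (-1)).2.2
  rw [sqexp 1 1 1 1] at q1
  rw [sqexp 1 1 (-1) (-1)] at q2
  rw [sqexp 1 (-1) 1 (-1)] at q3
  rw [sqexp 1 (-1) (-1) 1] at q4
  rw [sqexp 1 1 1 (-1)] at q5
  rw [sqexp 1 1 (-1) 1] at q6
  rw [sqexp 1 (-1) 1 1] at q7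
  rw [sqexp 1 (-1) (-1) (-1)] at q8
  rw [h192, q1, q2, q3, q4, q5, q6, q7, q8] at hsum
  have final : (192 : ℝ) * ∫ ω, X ω * Y ω * Z ω * W ω ∂P =
      192 * ((∫ ω, X ω * Y ω ∂P) * (∫ ω, Z ω * W ω ∂P) +
        (∫ ω, X ω * Z ω ∂P) * (∫ ω, Y ω * W ω ∂P) +
        (∫ ω, X ω * W ω ∂P) * (∫ ω, Y ω * Z ω ∂P)) := by
    rw [hsum]; ring
  linarith [final]
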